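/- The softmax function F : ℝⁿ → ℝⁿ, F(x)_i = exp(x_i)/Σ_j exp(x_j), is Lipschitz with respect to the Euclidean norm: there exists a constant Γ (one may take Γ = 1) such that ‖F(x) − F(y)‖₂ ≤ Γ ‖x − y‖₂ for all x, y ∈ ℝⁿ. -/

import Mathlib

open Finset

noncomputable def softmax (n : ℕ) (x : EuclideanSpace ℝ (Fin n)) :
    EuclideanSpace ℝ (Fin n) :=
  WithLp.toLp 2 (fun i => Real.exp (x i) / ∑ j : Fin n, Real.exp (x j))

namespace SmxAux

variable {n : ℕ}

noncomputable def S (x : Fin n → ℝ) : ℝ := ∑ j, Real.exp (x j)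

lemma S_pos (hn : 1 ≤ n) (x : Fin n → ℝ) : 0 < S x := by
  have : Nonempty (Fin n) := ⟨⟨0, hn⟩⟩
  exact Finset.sum_pos (fun j _ => Real.exp_pos _) Finset.univ_nonempty

noncomputable def p (x : Fin n → ℝ) (i : Fin n) : ℝ := Real.exp (x i) / S x

lemma p_nonneg (hn : 1 ≤ n) (x : Fin n → ℝ) (i : Fin n) : 0 ≤ p x i :=
  div_nonneg (Real.exp_pos _).le (S_pos hn x).le

lemma p_sum (hn : 1 ≤ n) (x : Fin n → ℝ) : ∑ i, p x i = 1 := by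
  simp only [p, ← Finset.sum_div]
  exact div_self (S_pos hn x).ne'

lemma p_le_one (hn : 1 ≤ n) (x : Fin n → ℝ) (i : Fin n) : p x i ≤ 1 := by
  rw [← p_sum hn x]
  exact Finset.single_le_sum (fun j _ => p_nonneg hn x j) (Finset.mem_univ i)

/-- The Jacobian as a CLM on the pi type. -/
noncomputable def L (x : Fin n → ℝ) : (Fin n → ℝ) →L[ℝ] (Fin n → ℝ) :=
  ContinuousLinearMap.pi fun i =>
    p x i • (ContinuousLinearMap.proj i - ∑ j, p x j • ContinuousLinearMap.proj (R := ℝ) (φ := fun _ : Fin n => ℝ) j)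

lemma L_apply (x v : Fin n → ℝ) (i : Fin n) :
    L x v i = p x i * (v i - ∑ j, p x j * v j) := by
  simp [L, ContinuousLinearMap.proj, smul_eq_mul]

lemma dS (x : Fin n → ℝ) :
    HasFDerivAt S (∑ j, Real.exp (x j) • ContinuousLinearMap.proj (R := ℝ) (φ := fun _ : Fin n => ℝ) j) x := by
  apply HasFDerivAt.fun_sum
  intro j _
  simpa [Function.comp_def] using (Real.hasDerivAt_exp (x j)).comp_hasFDerivAt (𝕜 := ℝ) x (hasFDerivAt_apply j x)

lemma hasFDerivAt_component (hn : 1 ≤ n) (x : Fin n → ℝ) (i : Fin n) :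
    HasFDerivAt (fun y => Real.exp (y i) / S y)
      (p x i • (ContinuousLinearMap.proj i - ∑ j, p x j • ContinuousLinearMap.proj (R := ℝ) (φ := fun _ : Fin n => ℝ) j)) x := by
  have hS := (S_pos hn x).ne'
  have h1 : HasFDerivAt (fun y : Fin n → ℝ => Real.exp (y i))
      (Real.exp (x i) • ContinuousLinearMap.proj (R := ℝ) (φ := fun _ : Fin n => ℝ) i) x :=
    by simpa [Function.comp_def] using (Real.hasDerivAt_exp (x i)).comp_hasFDerivAt (𝕜 := ℝ) x (hasFDerivAt_apply i x)
  have h2 : HasFDerivAt (fun y => (S y)⁻¹)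
      ((-(S x ^ 2)⁻¹) • (∑ j, Real.exp (x j) • ContinuousLinearMap.proj (R := ℝ) (φ := fun _ : Fin n => ℝ) j)) x :=
    (hasDerivAt_inv hS).comp_hasFDerivAt x (dS x)
  have h3 := h1.mul h2
  have heq : (fun y => Real.exp (y i) / S y) = fun y => Real.exp (y i) * (S y)⁻¹ := by
    funext y; rw [div_eq_mul_inv]
  rw [heq]
  refine h3.congr_fderiv ?_
  apply ContinuousLinearMap.ext; intro v
  simp only [ContinuousLinearMap.coe_smul', Pi.smul_apply, ContinuousLinearMap.coe_sub',
    Pi.sub_apply, ContinuousLinearMap.coe_sum', Finset.sum_apply, ContinuousLinearMap.add_apply,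
    ContinuousLinearMap.proj_apply, smul_eq_mul, ContinuousLinearMap.neg_apply]
  have hsum : ∑ j, p x j * v j = (S x)⁻¹ * ∑ j, Real.exp (x j) * v j := by
    rw [Finset.mul_sum]
    exact Finset.sum_congr rfl fun j _ => by rw [p, div_eq_mul_inv]; ring
  rw [p, hsum, div_eq_mul_inv]
  have h2 : (S x)⁻¹ ≠ 0 := inv_ne_zero hS
  field_simp
  ring


lemma hasFDerivAt_G (hn : 1 ≤ n) (x : Fin n → ℝ) :
    HasFDerivAt (fun y i => Real.exp (y i) / S y) (L x) x := by
  rw [L, hasFDerivAt_pi]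
  exact fun i => hasFDerivAt_component hn x i

/-- key inequality -/
lemma key (hn : 1 ≤ n) (x v : Fin n → ℝ) :
    ∑ i, (p x i * (v i - ∑ j, p x j * v j)) ^ 2 ≤ ∑ i, v i ^ 2 := by
  set s := ∑ j, p x j * v j with hs
  have h1 : ∀ i, (p x i * (v i - s)) ^ 2 ≤ p x i * (v i - s) ^ 2 := by
    intro i
    rw [mul_pow]
    have hp2 : p x i ^ 2 ≤ p x i := by
      nlinarith [mul_nonneg (p_nonneg hn x i) (sub_nonneg.2 (p_le_one hn x i))]
    exact mul_le_mul_of_nonneg_right hp2 (sq_nonneg _)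
  calc ∑ i, (p x i * (v i - s)) ^ 2 ≤ ∑ i, p x i * (v i - s) ^ 2 :=
        Finset.sum_le_sum fun i _ => h1 i
    _ = ∑ i, p x i * v i ^ 2 - s ^ 2 := by
        have expand : ∀ i : Fin n, p x i * (v i - s) ^ 2
            = p x i * v i ^ 2 - 2 * s * (p x i * v i) + s ^ 2 * p x i := by
          intro i; ring
        rw [Finset.sum_congr rfl fun i _ => expand i]
        rw [Finset.sum_add_distrib, Finset.sum_sub_distrib, ← Finset.mul_sum,
          ← Finset.mul_sum, ← hs, p_sum hn x]
        ring
    _ ≤ ∑ i, p x i * v i ^ 2 := by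
        nlinarith [sq_nonneg s]
    _ ≤ ∑ i, v i ^ 2 := by
        refine Finset.sum_le_sum fun i _ => ?_
        nlinarith [p_le_one hn x i, p_nonneg hn x i, sq_nonneg (v i)]

noncomputable def e (n : ℕ) : EuclideanSpace ℝ (Fin n) ≃L[ℝ] (Fin n → ℝ) :=
  PiLp.continuousLinearEquiv 2 ℝ (fun _ : Fin n => ℝ)

noncomputable def LE (n : ℕ) (x : EuclideanSpace ℝ (Fin n)) :
    EuclideanSpace ℝ (Fin n) →L[ℝ] EuclideanSpace ℝ (Fin n) :=
  ((e n).symm : (Fin n → ℝ) →L[ℝ] EuclideanSpace ℝ (Fin n)).comp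
    ((L ((e n) x)).comp ((e n) : EuclideanSpace ℝ (Fin n) →L[ℝ] (Fin n → ℝ)))

lemma hasFDerivAt_softmax (hn : 1 ≤ n) (x : EuclideanSpace ℝ (Fin n)) :
    HasFDerivAt (softmax n) (LE n x) x := by
  have h := hasFDerivAt_G hn ((e n) x)
  have := (((e n).symm : (Fin n → ℝ) →L[ℝ] EuclideanSpace ℝ (Fin n)).hasFDerivAt).comp
    x (h.comp x ((e n : EuclideanSpace ℝ (Fin n) →L[ℝ] (Fin n → ℝ)).hasFDerivAt))
  convert this using 1 <;> rfl

lemma LE_apply (x v : EuclideanSpace ℝ (Fin n)) (i : Fin n) :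
    LE n x v i = p ((e n) x) i * (v i - ∑ j, p ((e n) x) j * v j) := by
  simp only [LE, ContinuousLinearMap.coe_comp', Function.comp_apply]
  rw [show ((((e n).symm : (Fin n → ℝ) →L[ℝ] EuclideanSpace ℝ (Fin n)))
    ((L ((e n) x)) ((e n : EuclideanSpace ℝ (Fin n) →L[ℝ] (Fin n → ℝ)) v))) i
    = (L ((e n) x)) ((e n) v) i from rfl]
  rw [L_apply]
  rfl

lemma norm_LE_le (hn : 1 ≤ n) (x : EuclideanSpace ℝ (Fin n)) : ‖LE n x‖ ≤ 1 := by
  refine ContinuousLinearMap.opNorm_le_bound _ zero_le_one fun v => ?_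
  rw [one_mul, EuclideanSpace.norm_eq, EuclideanSpace.norm_eq]
  apply Real.sqrt_le_sqrt
  have := key hn ((e n) x) (fun i => v i)
  simpa [Real.norm_eq_abs, mul_pow, abs_mul, sq_abs, LE_apply] using this

end SmxAux

/-- Softmax is Lipschitz with respect to the Euclidean norm; one may take the Lipschitz
constant `Γ = 1`. -/
theorem softmax_lipschitz (n : ℕ) (hn : 1 ≤ n) :
    ∃ Γ : ℝ, Γ = 1 ∧ ∀ x y : EuclideanSpace ℝ (Fin n),
      ‖softmax n x - softmax n y‖ ≤ Γ * ‖x - y‖ := by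
  refine ⟨1, rfl, fun x y => ?_⟩
  exact Convex.norm_image_sub_le_of_norm_hasFDerivWithin_le
    (fun z _ => (SmxAux.hasFDerivAt_softmax hn z).hasFDerivWithinAt)
    (fun z _ => SmxAux.norm_LE_le hn z) convex_univ (Set.mem_univ y) (Set.mem_univ x)
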